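/- For every k in the torus, 4 ∫_{T} R(k,k') dk' = 8 sin²(πk)[1 + 2cos²(πk)], i.e. the total scattering rate equals the damping function β̂(k). -/

import Mathlib

open Real MeasureTheory

/-- The scattering kernel `R(k,k')`. -/
noncomputable def Rker (k k' : ℝ) : ℝ :=
  8 * Real.sin (π * k) ^ 2 * Real.sin (π * k') ^ 2 *
    (Real.sin (π * (k + k')) ^ 2 + Real.sin (π * (k - k')) ^ 2)

/-- The damping function `β̂(k)`. -/
noncomputable def betaHat (k : ℝ) : ℝ :=
  8 * Real.sin (π * k) ^ 2 * (1 + 2 * Real.cos (π * k) ^ 2)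

/-- The total scattering rate equals the damping function:
`4 ∫_T R(k,k') dk' = β̂(k)`, where `T = [-1/2,1/2]`. -/
theorem stmt2 (k : ℝ) :
    4 * ∫ k' in Set.Icc (-(1/2) : ℝ) (1/2), Rker k k' = betaHat k := by
  have hπ : (π:ℝ) ≠ 0 := Real.pi_ne_zero
  set S := Real.sin (π*k) with hSdef
  set C := Real.cos (π*k) with hCdef
  set F : ℝ → ℝ := fun x =>
    8*S^2*((1+2*C^2)/4*x - C^2/(2*π)*Real.sin (2*π*x)
      + (2*C^2-1)/(16*π)*Real.sin (4*π*x)) with hF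
  have key : ∀ x ∈ Set.uIcc (-(1/2):ℝ) (1/2), HasDerivAt F (Rker k x) x := by
    intro x _
    have h1 : HasDerivAt (fun x : ℝ => Real.sin (2*π*x))
        (Real.cos (2*π*x) * (2*π)) x := by
      simpa [Function.comp_def] using (Real.hasDerivAt_sin (2*π*x)).comp x
        (((hasDerivAt_id x).const_mul (2*π)))
    have h2 : HasDerivAt (fun x : ℝ => Real.sin (4*π*x))
        (Real.cos (4*π*x) * (4*π)) x := by
      simpa [Function.comp_def] using (Real.hasDerivAt_sin (4*π*x)).comp x
        (((hasDerivAt_id x).const_mul (4*π)))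
    have h3 : HasDerivAt (fun x : ℝ => (1+2*C^2)/4*x) ((1+2*C^2)/4) x := by
      simpa using (hasDerivAt_id x).const_mul ((1+2*C^2)/4)
    have hd := (((h3.sub (h1.const_mul (C^2/(2*π)))).add
      (h2.const_mul ((2*C^2-1)/(16*π)))).const_mul (8*S^2))
    refine hd.congr_deriv ?_
    symm
    have e2 : (2:ℝ)*π*x = 2*(π*x) := by ring
    have e4 : (4:ℝ)*π*x = 2*(2*(π*x)) := by ring
    rw [Rker, e2, e4, Real.cos_two_mul, Real.cos_two_mul, Real.cos_two_mul,
      show π*(k+x) = π*k + π*x by ring, show π*(k-x) = π*k - π*x by ring,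
      Real.sin_add, Real.sin_sub]
    set s := Real.sin (π*x)
    set c := Real.cos (π*x)
    have hs : s^2 + c^2 = 1 := Real.sin_sq_add_cos_sq _
    have hSC : S^2 + C^2 = 1 := Real.sin_sq_add_cos_sq _
    field_simp
    linear_combination (128*Real.sin (π*k)^2) *
      ((Real.cos (π*k)^2*(s^2+1-c^2) + (1-Real.cos (π*k)^2)*c^2) * hs
      + s^2*c^2 * Real.sin_sq_add_cos_sq (π*k))
  have hcont : IntervalIntegrable (Rker k) volume (-(1/2):ℝ) (1/2) := by
    apply Continuous.intervalIntegrable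
    unfold Rker
    fun_prop
  have hle : (-(1/2):ℝ) ≤ 1/2 := by norm_num
  have hint : ∫ k' in Set.Icc (-(1/2) : ℝ) (1/2), Rker k k'
      = ∫ x in (-(1/2):ℝ)..(1/2), Rker k x := by
    rw [intervalIntegral.integral_of_le hle, MeasureTheory.integral_Icc_eq_integral_Ioc]
  rw [hint, intervalIntegral.integral_eq_sub_of_hasDerivAt key hcont]
  have s1 : Real.sin (2*π*(1/2:ℝ)) = 0 := by
    rw [show (2:ℝ)*π*(1/2) = π by ring, Real.sin_pi]
  have s2 : Real.sin (2*π*(-(1/2):ℝ)) = 0 := by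
    rw [show (2:ℝ)*π*(-(1/2)) = -π by ring, Real.sin_neg, Real.sin_pi, neg_zero]
  have s3 : Real.sin (4*π*(1/2:ℝ)) = 0 := by
    rw [show (4:ℝ)*π*(1/2) = 2*π by ring, Real.sin_two_pi]
  have s4 : Real.sin (4*π*(-(1/2):ℝ)) = 0 := by
    rw [show (4:ℝ)*π*(-(1/2)) = -(2*π) by ring, Real.sin_neg, Real.sin_two_pi, neg_zero]
  rw [hF]
  simp only [s1, s2, s3, s4]
  rw [betaHat, ← hSdef, ← hCdef]
  ring
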